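/- For every non-negative integer n, there exists a graph of degree d' = 4n satisfying Property R* with exactly 2d'+2 vertices, constructed inductively from the degree-0 base graph (two isolated vertices) by repeatedly adding 8 vertices and increasing the degree by 4. -/

import Mathlib

open SimpleGraph
open Finset

/-- Property R*: there is an involution `f` on `V(G')` such that
`E(G') ∪ f(E(G')) ∪ {(v, f v) : v ∈ V(G')}` is the edge set of the complete graph. -/
def PropertyRStar {β : Type*} (G' : SimpleGraph β) (f : β → β) : Prop :=
  ∀ x y : β, x ≠ y → (G'.Adj x y ∨ G'.Adj (f x) (f y) ∨ y = f x)

namespace Stmt11Aux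

def adj (n : ℕ) (x y : ZMod (4*n+1) × Bool) : Prop :=
  if x.2 then
    if y.2 then 1 ≤ (x.1 - y.1).val ∧ ((x.1 - y.1).val ≤ n ∨ 3*n+1 ≤ (x.1 - y.1).val)
    else 1 ≤ (x.1 - y.1).val ∧ (x.1 - y.1).val ≤ 2*n
  else
    if y.2 then 1 ≤ (y.1 - x.1).val ∧ (y.1 - x.1).val ≤ 2*n
    else n+1 ≤ (x.1 - y.1).val ∧ (x.1 - y.1).val ≤ 3*n

instance (n : ℕ) : DecidableRel (adj n) := fun x y => by unfold adj; infer_instance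

lemma val_sub_add (n : ℕ) (a c : ZMod (4*n+1)) (h : a ≠ c) :
    (a - c).val + (c - a).val = 4*n+1 := by
  haveI : NeZero (4*n+1) := ⟨by omega⟩
  have h1 : a - c ≠ 0 := sub_ne_zero.mpr h
  have h2 : c - a = -(a - c) := by ring
  rw [h2, ZMod.neg_val, if_neg h1]
  have := ZMod.val_lt (a - c)
  omega

lemma val_sub_pos (n : ℕ) (a c : ZMod (4*n+1)) (h : a ≠ c) :
    1 ≤ (a - c).val := by
  haveI : NeZero (4*n+1) := ⟨by omega⟩
  have h1 : a - c ≠ 0 := sub_ne_zero.mpr h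
  have := (ZMod.val_eq_zero (a - c)).not.mpr h1
  omega

lemma val_sub_lt (n : ℕ) (a c : ZMod (4*n+1)) : (a - c).val < 4*n+1 := by
  haveI : NeZero (4*n+1) := ⟨by omega⟩
  exact ZMod.val_lt _

lemma ne_of_val_pos (n : ℕ) (a c : ZMod (4*n+1)) (h : 1 ≤ (a - c).val) : a ≠ c := by
  intro he; subst he; simp at h

def graph (n : ℕ) : SimpleGraph (ZMod (4*n+1) × Bool) where
  Adj := adj n
  symm := by
    refine ⟨?_⟩
    rintro ⟨a, b⟩ ⟨c, d⟩ h
    cases b <;> cases d <;> simp only [adj] at h ⊢ <;> simp at h ⊢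
    · have hne : a ≠ c := ne_of_val_pos n a c (by omega)
      have h1 := val_sub_add n a c hne
      have h2 := val_sub_lt n a c
      have h3 := val_sub_lt n c a
      omega
    · exact h
    · exact h
    · have hne : a ≠ c := ne_of_val_pos n a c (by omega)
      have h1 := val_sub_add n a c hne
      have h2 := val_sub_lt n a c
      have h3 := val_sub_lt n c a
      omega
  loopless := by
    refine ⟨?_⟩
    rintro ⟨a, b⟩ h
    cases b <;> simp [adj] at h

lemma prop (n : ℕ) : PropertyRStar (graph n) (fun x => (x.1, !x.2)) := by
  rintro ⟨a, b⟩ ⟨c, d⟩ hxy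
  by_cases hac : a = c
  · subst hac
    have hbd : b ≠ d := fun h => hxy (by simp [h])
    right; right
    cases b <;> cases d <;> simp_all
  · have h1 := val_sub_add n a c hac
    have h2 := val_sub_lt n a c
    have h3 := val_sub_lt n c a
    have h4 := val_sub_pos n a c hac
    have h5 := val_sub_pos n c a (Ne.symm hac)
    have hG : ∀ x y, (graph n).Adj x y ↔ adj n x y := fun _ _ => Iff.rfl
    simp only [hG]
    cases b <;> cases d <;> simp only [adj] at * <;> simp <;> omega

lemma count_val (n : ℕ) (Q : ℕ → Prop) [DecidablePred Q] :
    ((univ : Finset (ZMod (4*n+1))).filter fun c => Q c.val).card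
      = ((range (4*n+1)).filter Q).card := by
  haveI : NeZero (4*n+1) := ⟨by omega⟩
  refine Finset.card_nbij' (fun c => c.val) (fun k => (k : ZMod (4*n+1))) ?_ ?_ ?_ ?_
  · intro c hc
    simp only [Finset.mem_coe, Finset.mem_filter, Finset.mem_range] at *
    exact ⟨ZMod.val_lt c, hc.2⟩
  · intro k hk
    simp only [Finset.mem_coe, Finset.mem_filter, Finset.mem_range, Finset.mem_univ, true_and] at *
    rw [ZMod.val_cast_of_lt hk.1]; exact hk.2
  · intro c _
    exact ZMod.natCast_rightInverse c
  · intro k hk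
    simp only [Finset.mem_coe, Finset.mem_filter, Finset.mem_range] at hk
    exact ZMod.val_cast_of_lt hk.1

lemma count_shift_left (n : ℕ) (a : ZMod (4*n+1)) (Q : ℕ → Prop) [DecidablePred Q] :
    ((univ : Finset (ZMod (4*n+1))).filter fun c => Q (a - c).val).card
      = ((range (4*n+1)).filter Q).card := by
  rw [← count_val n Q]
  refine Finset.card_nbij' (fun c => a - c) (fun c => a - c) ?_ ?_ ?_ ?_ <;>
    intro c hc <;> simp only [Finset.mem_coe, mem_filter, mem_univ, true_and, sub_sub_cancel] at *
  · exact hc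
  · exact hc

lemma count_shift_right (n : ℕ) (a : ZMod (4*n+1)) (Q : ℕ → Prop) [DecidablePred Q] :
    ((univ : Finset (ZMod (4*n+1))).filter fun c => Q (c - a).val).card
      = ((range (4*n+1)).filter Q).card := by
  rw [← count_val n Q]
  refine Finset.card_nbij' (fun c => c - a) (fun c => c + a) ?_ ?_ ?_ ?_
  · intro c hc; simpa using hc
  · intro c hc; simpa using hc
  · intro c _; simp
  · intro c _; simp

lemma count_cross (n : ℕ) :
    ((range (4*n+1)).filter fun k => 1 ≤ k ∧ k ≤ 2*n).card = 2*n := by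
  have : ((range (4*n+1)).filter fun k => 1 ≤ k ∧ k ≤ 2*n) = Finset.Icc 1 (2*n) := by
    ext k; simp only [mem_filter, mem_range, Finset.mem_Icc]; omega
  rw [this, Nat.card_Icc]; omega

lemma count_inner_false (n : ℕ) :
    ((range (4*n+1)).filter fun k => n+1 ≤ k ∧ k ≤ 3*n).card = 2*n := by
  have : ((range (4*n+1)).filter fun k => n+1 ≤ k ∧ k ≤ 3*n) = Finset.Icc (n+1) (3*n) := by
    ext k; simp only [mem_filter, mem_range, Finset.mem_Icc]; omega
  rw [this, Nat.card_Icc]; omega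

lemma count_inner_true (n : ℕ) :
    ((range (4*n+1)).filter fun k => 1 ≤ k ∧ (k ≤ n ∨ 3*n+1 ≤ k)).card = 2*n := by
  have he : ((range (4*n+1)).filter fun k => 1 ≤ k ∧ (k ≤ n ∨ 3*n+1 ≤ k))
      = Finset.Icc 1 n ∪ Finset.Icc (3*n+1) (4*n) := by
    ext k
    simp only [mem_filter, mem_range, Finset.mem_union, Finset.mem_Icc]; omega
  rw [he, Finset.card_union_of_disjoint, Nat.card_Icc, Nat.card_Icc]
  · omega
  · rw [Finset.disjoint_left]
    intro k hk hk'
    simp only [Finset.mem_Icc] at *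
    omega

lemma filter_prod_card (n : ℕ) (p : ZMod (4*n+1) × Bool → Prop) [DecidablePred p] :
    ((univ : Finset (ZMod (4*n+1) × Bool)).filter p).card
      = ((univ : Finset (ZMod (4*n+1))).filter fun c => p (c, true)).card
        + ((univ : Finset (ZMod (4*n+1))).filter fun c => p (c, false)).card := by
  have he : (univ : Finset (ZMod (4*n+1) × Bool)).filter p
      = ((univ : Finset (ZMod (4*n+1))).filter fun c => p (c, true)).image (fun c => (c, true))
        ∪ ((univ : Finset (ZMod (4*n+1))).filter fun c => p (c, false)).image
            (fun c => (c, false)) := by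
    ext ⟨c, b⟩
    cases b <;> simp
  rw [he, Finset.card_union_of_disjoint, Finset.card_image_of_injective,
    Finset.card_image_of_injective]
  · intro x y h; simpa using h
  · intro x y h; simpa using h
  · rw [Finset.disjoint_left]
    rintro ⟨c, b⟩ h1 h2
    simp only [Finset.mem_image] at *
    obtain ⟨_, _, h1⟩ := h1
    obtain ⟨_, _, h2⟩ := h2
    rw [← h1] at h2
    simp at h2

lemma ncard_nbr (n : ℕ) (v : ZMod (4*n+1) × Bool) :
    ((graph n).neighborSet v).ncard = 4*n := by
  haveI : NeZero (4*n+1) := ⟨by omega⟩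
  classical
  rw [Set.ncard_eq_toFinset_card']
  have ht : ((graph n).neighborSet v).toFinset
      = (univ : Finset (ZMod (4*n+1) × Bool)).filter (fun y => adj n v y) := by
    ext y; rw [Set.mem_toFinset]; simp [graph, SimpleGraph.neighborSet]
  rw [ht, filter_prod_card]
  obtain ⟨a, b⟩ := v
  cases b
  · have e1 : ((univ : Finset (ZMod (4*n+1))).filter fun c => adj n (a, false) (c, true))
        = ((univ : Finset (ZMod (4*n+1))).filter fun c =>
            1 ≤ (c - a).val ∧ (c - a).val ≤ 2*n) := by
      apply Finset.filter_congr; intro c _; simp [adj]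
    have e2 : ((univ : Finset (ZMod (4*n+1))).filter fun c => adj n (a, false) (c, false))
        = ((univ : Finset (ZMod (4*n+1))).filter fun c =>
            n+1 ≤ (a - c).val ∧ (a - c).val ≤ 3*n) := by
      apply Finset.filter_congr; intro c _; simp [adj]
    rw [e1, e2, count_shift_right n a (fun k => 1 ≤ k ∧ k ≤ 2*n),
      count_shift_left n a (fun k => n+1 ≤ k ∧ k ≤ 3*n), count_cross, count_inner_false]
    omega
  · have e1 : ((univ : Finset (ZMod (4*n+1))).filter fun c => adj n (a, true) (c, true))
        = ((univ : Finset (ZMod (4*n+1))).filter fun c =>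
            1 ≤ (a - c).val ∧ ((a - c).val ≤ n ∨ 3*n+1 ≤ (a - c).val)) := by
      apply Finset.filter_congr; intro c _; simp [adj]
    have e2 : ((univ : Finset (ZMod (4*n+1))).filter fun c => adj n (a, true) (c, false))
        = ((univ : Finset (ZMod (4*n+1))).filter fun c =>
            1 ≤ (a - c).val ∧ (a - c).val ≤ 2*n) := by
      apply Finset.filter_congr; intro c _; simp [adj]
    rw [e1, e2, count_shift_left n a (fun k => 1 ≤ k ∧ (k ≤ n ∨ 3*n+1 ≤ k)),
      count_shift_left n a (fun k => 1 ≤ k ∧ k ≤ 2*n), count_inner_true, count_cross]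
    omega

end Stmt11Aux

/-- For every non-negative integer `n`, there exists a graph of degree `d' = 4n`
satisfying Property R* (with respect to an involution) with exactly `2d' + 2`
vertices. -/
theorem stmt_11 (n : ℕ) :
    ∃ (β : Type) (_ : Fintype β) (G' : SimpleGraph β) (f : β → β),
      Function.Involutive f ∧ PropertyRStar G' f ∧
      Fintype.card β = 2 * (4 * n) + 2 ∧
      ∀ v : β, (G'.neighborSet v).ncard = 4 * n := by
  haveI : NeZero (4*n+1) := ⟨by omega⟩
  refine ⟨ZMod (4*n+1) × Bool, inferInstance, Stmt11Aux.graph n, fun x => (x.1, !x.2),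
    ?_, Stmt11Aux.prop n, ?_, Stmt11Aux.ncard_nbr n⟩
  · intro x; simp
  · rw [Fintype.card_prod, ZMod.card, Fintype.card_bool]; ring
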